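/- Let k be a field and ℓ/k a finite Galois extension with Galois group G. Then the twisted group ring ℓ♯G (which is ℓG as a left ℓ-module, with multiplication (a₁γ₁)(a₂γ₂) = a₁·γ₁(a₂)·γ₁γ₂) is isomorphic as a k-algebra to End_k(ℓ). -/

import Mathlib

open scoped Classical

noncomputable section

variable (k ℓ : Type) [Field k] [Field ℓ] [Algebra k ℓ] [FiniteDimensional k ℓ]

/-- The underlying `k`-linear action map of the twisted group ring `ℓ♯G` on `ℓ`:
`a = (a_γ)_γ` acts as `x ↦ ∑_γ a_γ·γ(x)`. -/
def twistedToEnd (a : (ℓ ≃ₐ[k] ℓ) → ℓ) : ℓ →ₗ[k] ℓ :=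
  ∑ γ : ℓ ≃ₐ[k] ℓ, a γ • (γ.toLinearMap)

/-- The multiplication of the twisted group ring `ℓ♯G` (with `ℓG` as underlying
left `ℓ`-module): `(a·b)(σ) = ∑_γ a_γ · γ(b_{γ⁻¹σ})`. -/
def twistedMul (a b : (ℓ ≃ₐ[k] ℓ) → ℓ) : (ℓ ≃ₐ[k] ℓ) → ℓ :=
  fun σ => ∑ γ : ℓ ≃ₐ[k] ℓ, a γ * γ (b (γ⁻¹ * σ))

lemma twistedToEnd_apply (a : (ℓ ≃ₐ[k] ℓ) → ℓ) (x : ℓ) :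
    twistedToEnd k ℓ a x = ∑ γ : ℓ ≃ₐ[k] ℓ, a γ * γ x := by
  simp [twistedToEnd, LinearMap.sum_apply, LinearMap.smul_apply, smul_eq_mul]

/-- `twistedToEnd` as a `k`-linear map. -/
def twistedToEndₗ : ((ℓ ≃ₐ[k] ℓ) → ℓ) →ₗ[k] (ℓ →ₗ[k] ℓ) where
  toFun := twistedToEnd k ℓ
  map_add' a b := by
    simp [twistedToEnd, add_smul, Finset.sum_add_distrib]
  map_smul' c a := by
    simp [twistedToEnd, Finset.smul_sum, smul_smul, Pi.smul_apply, smul_assoc]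

lemma twistedToEnd_injective : Function.Injective (twistedToEnd k ℓ) := by
  have hli : LinearIndependent ℓ (M := ℓ → ℓ)
      (fun γ : ℓ ≃ₐ[k] ℓ => (γ : ℓ → ℓ)) := by
    have h := linearIndependent_monoidHom ℓ ℓ
    have hinj : Function.Injective
        (fun γ : ℓ ≃ₐ[k] ℓ => (γ : ℓ →* ℓ)) := by
      intro γ₁ γ₂ h
      ext x
      exact DFunLike.congr_fun h x
    exact h.comp _ hinj
  intro a b hab
  have key : ∀ c : (ℓ ≃ₐ[k] ℓ) → ℓ, twistedToEnd k ℓ c = 0 → c = 0 := by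
    intro c hc
    have : ∑ γ : ℓ ≃ₐ[k] ℓ, c γ • (fun x => γ x : ℓ → ℓ) = 0 := by
      funext x
      have := congrArg (fun f : ℓ →ₗ[k] ℓ => f x) hc
      simpa [twistedToEnd_apply] using this
    funext γ
    exact Fintype.linearIndependent_iff.mp hli c this γ
  have : twistedToEnd k ℓ (a - b) = 0 := by
    have := (twistedToEndₗ k ℓ).map_sub a b
    simp only [twistedToEndₗ, LinearMap.coe_mk, AddHom.coe_mk] at this
    rw [show twistedToEnd k ℓ (a - b) = twistedToEnd k ℓ a - twistedToEnd k ℓ b from this, hab, sub_self]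
  have := key (a - b) this
  exact sub_eq_zero.mp this

theorem twisted_group_ring_iso_end [IsGalois k ℓ] :
    Function.Bijective (twistedToEnd k ℓ) ∧
    (∀ a b, twistedToEnd k ℓ (a + b) = twistedToEnd k ℓ a + twistedToEnd k ℓ b) ∧
    (∀ a b, twistedToEnd k ℓ (twistedMul k ℓ a b) =
      (twistedToEnd k ℓ a).comp (twistedToEnd k ℓ b)) ∧
    twistedToEnd k ℓ (fun γ => if γ = 1 then 1 else 0) = LinearMap.id := by
  refine ⟨⟨twistedToEnd_injective k ℓ, ?_⟩, ?_, ?_, ?_⟩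
  · -- surjectivity by dimension count
    have hdim : Module.finrank k ((ℓ ≃ₐ[k] ℓ) → ℓ) = Module.finrank k (ℓ →ₗ[k] ℓ) := by
      rw [Module.finrank_pi_fintype, Module.finrank_linearMap, Finset.sum_const,
        Finset.card_univ, ← Nat.card_eq_fintype_card, IsGalois.card_aut_eq_finrank k ℓ, smul_eq_mul]
    have hinj : Function.Injective (twistedToEndₗ k ℓ) := twistedToEnd_injective k ℓ
    exact (LinearMap.injective_iff_surjective_of_finrank_eq_finrank hdim).mp hinj
  · intro a b
    exact (twistedToEndₗ k ℓ).map_add a b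
  · intro a b
    ext x
    calc twistedToEnd k ℓ (twistedMul k ℓ a b) x
        = ∑ σ : ℓ ≃ₐ[k] ℓ, ∑ γ : ℓ ≃ₐ[k] ℓ, a γ * γ (b (γ⁻¹ * σ)) * σ x := by
          simp [twistedToEnd_apply, twistedMul, Finset.sum_mul]
      _ = ∑ γ : ℓ ≃ₐ[k] ℓ, ∑ σ : ℓ ≃ₐ[k] ℓ, a γ * γ (b (γ⁻¹ * σ)) * σ x :=
          Finset.sum_comm
      _ = ∑ γ : ℓ ≃ₐ[k] ℓ, ∑ τ : ℓ ≃ₐ[k] ℓ, a γ * γ (b τ) * (γ * τ) x := by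
          refine Finset.sum_congr rfl fun γ _ => ?_
          refine (Fintype.sum_equiv (Equiv.mulLeft γ)
            (fun τ => a γ * γ (b τ) * (γ * τ) x)
            (fun σ => a γ * γ (b (γ⁻¹ * σ)) * σ x) fun τ => ?_).symm
          simp [inv_mul_cancel_left]
      _ = (twistedToEnd k ℓ a).comp (twistedToEnd k ℓ b) x := by
          simp only [LinearMap.comp_apply, twistedToEnd_apply, map_sum, map_mul,
            Finset.mul_sum]
          rw [Finset.sum_comm]
          exact Finset.sum_congr rfl fun γ _ => Finset.sum_congr rfl fun τ _ => by
            rw [AlgEquiv.mul_apply, mul_assoc]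
  · ext x
    rw [twistedToEnd_apply]
    simp [Finset.sum_ite_eq']

end
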